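/- Derivative form of the generating-function theorem: Let f : ℂ → ℂ be an entire function, let A be an m×m complex matrix, let n ∈ ℕ, and let p, q ∈ ℕ^m with |p| = |q| = n. Then the iterated partial derivative ∂_{x_1}^{p_1} ⋯ ∂_{x_m}^{p_m} ∂_{y_1}^{q_1} ⋯ ∂_{y_m}^{q_m} of the function (x,y) ↦ f(x^T A y), evaluated at x = y = 0, equals Per(A_{p,q}) · f^{(n)}(0), where f^{(n)} is the n-th derivative of f and x^T A y = Σ_{i,j} x_i a_{ij} y_j. -/

import Mathlib

open BigOperators Matrix

/-- The list of row indices of `A_{p,·}`: each index `i` repeated `p i` times, in order. -/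
def repList {m : ℕ} (p : Fin m → ℕ) : List (Fin m) :=
  (List.finRange m).flatMap fun i => List.replicate (p i) i

lemma repList_length {m : ℕ} (p : Fin m → ℕ) : (repList p).length = ∑ i, p i := by
  simp only [repList, List.length_flatMap, Fin.sum_univ_def]
  congr 1
  apply List.map_congr_left
  intro i _
  simp

/-- The matrix `A_{p,q}`: row `i` repeated `p i` times, column `j` repeated `q j` times. -/
def repMat {m : ℕ} (A : Matrix (Fin m) (Fin m) ℂ) (p q : Fin m → ℕ) :
    Matrix (Fin (∑ i, p i)) (Fin (∑ j, q j)) ℂ :=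
  Matrix.of fun r c =>
    A ((repList p).get (Fin.cast (repList_length p).symm r))
      ((repList q).get (Fin.cast (repList_length q).symm c))

/-- `Per(A_{p,q})`; by convention `0` when the matrix is not square. -/
noncomputable def perRep {m : ℕ} (A : Matrix (Fin m) (Fin m) ℂ) (p q : Fin m → ℕ) : ℂ :=
  if h : (∑ i, p i) = (∑ j, q j) then
    (Matrix.of fun r c : Fin (∑ i, p i) => repMat A p q r (Fin.cast h c)).permanent
  else 0


/-- The partial derivative of `F : (α → ℂ) → ℂ` in the `i`-th coordinate. -/
noncomputable def pderivAt {α : Type*} [DecidableEq α] (i : α) (F : (α → ℂ) → ℂ) :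
    (α → ℂ) → ℂ :=
  fun v => deriv (fun t => F (Function.update v i t)) (v i)

/-- The iterated partial derivative `∂^{p i₁} ∂^{p i₂} ⋯` taken along the list `l`. -/
noncomputable def multiPDeriv {α : Type*} [DecidableEq α] (l : List α) (p : α → ℕ)
    (F : (α → ℂ) → ℂ) : (α → ℂ) → ℂ :=
  l.foldr (fun i G => (pderivAt i)^[p i] G) F

namespace GFThm

variable {m N : ℕ}

noncomputable def cc (A : Matrix (Fin m) (Fin m) ℂ) (j : Fin m)
    (v : Fin m ⊕ Fin m → ℂ) : ℂ := ∑ i, v (Sum.inl i) * A i j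

noncomputable def SS (A : Matrix (Fin m) (Fin m) ℂ) (v : Fin m ⊕ Fin m → ℂ) : ℂ :=
  ∑ j, cc A j v * v (Sum.inr j)

noncomputable def DX (l : List (Fin m)) (F : (Fin m ⊕ Fin m → ℂ) → ℂ) :
    (Fin m ⊕ Fin m → ℂ) → ℂ := l.foldr (fun i G => pderivAt (Sum.inl i) G) F

noncomputable def DY (l : List (Fin m)) (F : (Fin m ⊕ Fin m → ℂ) → ℂ) :
    (Fin m ⊕ Fin m → ℂ) → ℂ := l.foldr (fun j G => pderivAt (Sum.inr j) G) F

noncomputable def PP (A : Matrix (Fin m) (Fin m) ℂ) (col : Fin N → Fin m)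
    (T : Finset (Fin N)) (v : Fin m ⊕ Fin m → ℂ) : ℂ := ∏ s ∈ T, cc A (col s) v

noncomputable def RR (A : Matrix (Fin m) (Fin m) ℂ) (col : Fin N → Fin m) :
    List (Fin m) → Finset (Fin N) → (Fin m ⊕ Fin m → ℂ) → ℂ
  | [], T, v => PP A col T v
  | i :: l, T, v => ∑ s ∈ T, A i (col s) * RR A col l (T.erase s) v

lemma foldr_replicate {α β : Type*} (step : α → β → β) (i : α) (n : ℕ) (b : β) :
    (List.replicate n i).foldr step b = (step i)^[n] b := by
  induction n with
  | zero => rfl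
  | succ k ih => simp [List.replicate_succ, ih, Function.iterate_succ_apply']

lemma foldr_iterate_eq {α β : Type*} (step : α → β → β) (k : α → ℕ) :
    ∀ (l : List α) (b : β),
      l.foldr (fun i G => (step i)^[k i] G) b =
        (l.flatMap fun i => List.replicate (k i) i).foldr step b := by
  intro l
  induction l with
  | nil => intro b; rfl
  | cons i l ih =>
    intro b
    simp [List.flatMap_cons, List.foldr_append, ih, foldr_replicate]

lemma multiPDeriv_split (p q : Fin m → ℕ) (F : (Fin m ⊕ Fin m → ℂ) → ℂ) :
    multiPDeriv (((List.finRange m).map Sum.inl) ++ ((List.finRange m).map Sum.inr))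
      (Sum.elim p q) F = DX (repList p) (DY (repList q) F) := by
  unfold multiPDeriv DX DY
  rw [List.foldr_append, List.foldr_map, List.foldr_map]
  simp only [Sum.elim_inl, Sum.elim_inr]
  rw [foldr_iterate_eq (fun i G => pderivAt (Sum.inl i) G) p,
    foldr_iterate_eq (fun j G => pderivAt (Sum.inr j) G) q]
  rfl


section
variable {m N : ℕ} (A : Matrix (Fin m) (Fin m) ℂ) (col : Fin N → Fin m)

lemma cc_update_inr (j j' : Fin m) (v : Fin m ⊕ Fin m → ℂ) (t : ℂ) :
    cc A j (Function.update v (Sum.inr j') t) = cc A j v := by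
  unfold cc
  refine Finset.sum_congr rfl fun i _ => ?_
  rw [Function.update_of_ne (by simp)]

lemma cc_update_inl_hasDeriv (j i : Fin m) (v : Fin m ⊕ Fin m → ℂ) (t₀ : ℂ) :
    HasDerivAt (fun t => cc A j (Function.update v (Sum.inl i) t)) (A i j) t₀ := by
  have h : ∀ i' : Fin m, HasDerivAt
      (fun t => Function.update v (Sum.inl i) t (Sum.inl i') * A i' j)
      (if i' = i then A i j else 0) t₀ := by
    intro i'
    by_cases hi : i' = i
    · subst hi
      simp only [Function.update_self, if_pos rfl]
      simpa using (hasDerivAt_id t₀).mul_const (A i' j)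
    · simp only [if_neg hi]
      have : (fun t => Function.update v (Sum.inl i) t (Sum.inl i') * A i' j)
          = fun _ => v (Sum.inl i') * A i' j := by
        funext t
        rw [Function.update_of_ne (by simp [hi])]
      rw [this]
      exact hasDerivAt_const _ _
  have := HasDerivAt.fun_sum (u := Finset.univ) (fun i' _ => h i')
  simpa [cc, Finset.sum_ite_eq' Finset.univ i (fun _ => A i j)] using this

lemma SS_update_inl (i : Fin m) (v : Fin m ⊕ Fin m → ℂ) (t : ℂ)
    (hz : ∀ j, v (Sum.inr j) = 0) : SS A (Function.update v (Sum.inl i) t) = 0 := by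
  unfold SS
  refine Finset.sum_eq_zero fun j _ => ?_
  rw [Function.update_of_ne (by simp), hz j, mul_zero]

lemma SS_hasDeriv (j : Fin m) (v : Fin m ⊕ Fin m → ℂ) (t₀ : ℂ) :
    HasDerivAt (fun t => SS A (Function.update v (Sum.inr j) t)) (cc A j v) t₀ := by
  have h : ∀ j' : Fin m, HasDerivAt
      (fun t => cc A j' (Function.update v (Sum.inr j) t) *
        Function.update v (Sum.inr j) t (Sum.inr j'))
      (if j' = j then cc A j v else 0) t₀ := by
    intro j'
    by_cases hj : j' = j
    · subst hj
      simp only [if_pos rfl]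
      have : (fun t => cc A j' (Function.update v (Sum.inr j') t) *
          Function.update v (Sum.inr j') t (Sum.inr j')) = fun t => cc A j' v * t := by
        funext t
        rw [cc_update_inr, Function.update_self]
      rw [this]
      simpa using (hasDerivAt_id t₀).const_mul (cc A j' v)
    · simp only [if_neg hj]
      have : (fun t => cc A j' (Function.update v (Sum.inr j) t) *
          Function.update v (Sum.inr j) t (Sum.inr j'))
          = fun _ => cc A j' v * v (Sum.inr j') := by
        funext t
        rw [cc_update_inr, Function.update_of_ne (by simp [hj])]
      rw [this]
      exact hasDerivAt_const _ _
  have := HasDerivAt.fun_sum (u := Finset.univ) (fun j' _ => h j')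
  simpa [SS, Finset.sum_ite_eq' Finset.univ j (fun _ => cc A j v)] using this

lemma PP_hasDeriv (T : Finset (Fin N)) (i : Fin m) (v : Fin m ⊕ Fin m → ℂ) (x : ℂ) :
    HasDerivAt (fun t => PP A col T (Function.update v (Sum.inl i) t))
      (∑ s ∈ T, A i (col s) * PP A col (T.erase s) (Function.update v (Sum.inl i) x)) x := by
  have h := HasDerivAt.fun_finset_prod (u := T)
    (f := fun s t => cc A (col s) (Function.update v (Sum.inl i) t))
    (f' := fun s => A i (col s)) (x := x)
    (fun s _ => cc_update_inl_hasDeriv A (col s) i v x)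
  have he : (∑ s ∈ T, (∏ s' ∈ T.erase s,
        cc A (col s') (Function.update v (Sum.inl i) x)) • A i (col s))
      = ∑ s ∈ T, A i (col s) * PP A col (T.erase s) (Function.update v (Sum.inl i) x) := by
    refine Finset.sum_congr rfl fun s _ => ?_
    simp [PP, smul_eq_mul, mul_comm]
  rw [he] at h
  exact h

end
section
variable {m N : ℕ} (A : Matrix (Fin m) (Fin m) ℂ) (col : Fin N → Fin m)

lemma RR_diffAt : ∀ (l : List (Fin m)) (T : Finset (Fin N)) (v : Fin m ⊕ Fin m → ℂ)
    (i : Fin m) (t₀ : ℂ),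
    DifferentiableAt ℂ (fun t => RR A col l T (Function.update v (Sum.inl i) t)) t₀ := by
  intro l
  induction l with
  | nil =>
    intro T v i t₀
    exact (PP_hasDeriv A col T i v t₀).differentiableAt
  | cons j l ih =>
    intro T v i t₀
    have : (fun t => RR A col (j :: l) T (Function.update v (Sum.inl i) t))
        = fun t => ∑ s ∈ T, A j (col s) * RR A col l (T.erase s)
            (Function.update v (Sum.inl i) t) := rfl
    rw [this]
    exact DifferentiableAt.fun_sum fun s _ => (ih (T.erase s) v i t₀).const_mul _

lemma sum_erase_comm {β : Type*} [DecidableEq β] (T : Finset β) (F : β → β → ℂ) :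
    ∑ s ∈ T, ∑ s' ∈ T.erase s, F s s' = ∑ s ∈ T, ∑ s' ∈ T.erase s, F s' s := by
  have h : ∀ G : β → β → ℂ, (∑ s ∈ T, ∑ s' ∈ T.erase s, G s s')
      = ∑ s ∈ T, ∑ s' ∈ T, if s' ≠ s then G s s' else 0 := by
    intro G
    refine Finset.sum_congr rfl fun s _ => ?_
    rw [← Finset.sum_filter]
    congr 1
    ext x
    simp [Finset.mem_erase, and_comm]
  rw [h, h, Finset.sum_comm]
  refine Finset.sum_congr rfl fun s _ => Finset.sum_congr rfl fun s' _ => ?_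
  simp only [ne_comm]

lemma pderivAt_RR (i : Fin m) :
    ∀ (l : List (Fin m)) (T : Finset (Fin N)),
      pderivAt (Sum.inl i) (fun v => RR A col l T v) = fun v => RR A col (i :: l) T v := by
  intro l
  induction l with
  | nil =>
    intro T
    funext v
    show deriv (fun t => PP A col T (Function.update v (Sum.inl i) t)) (v (Sum.inl i)) = _
    rw [(PP_hasDeriv A col T i v (v (Sum.inl i))).deriv]
    simp only [Function.update_eq_self]
    rfl
  | cons j l ih =>
    intro T
    funext v
    show deriv (fun t => RR A col (j :: l) T (Function.update v (Sum.inl i) t))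
      (v (Sum.inl i)) = _
    have h1 : (fun t => RR A col (j :: l) T (Function.update v (Sum.inl i) t))
        = fun t => ∑ s ∈ T, A j (col s) * RR A col l (T.erase s)
            (Function.update v (Sum.inl i) t) := rfl
    rw [h1, deriv_fun_sum (fun s _ => ((RR_diffAt A col l (T.erase s) v i
      (v (Sum.inl i))).const_mul _))]
    have h2 : ∀ s ∈ T, deriv (fun t => A j (col s) * RR A col l (T.erase s)
        (Function.update v (Sum.inl i) t)) (v (Sum.inl i))
        = A j (col s) * RR A col (i :: l) (T.erase s) v := by
      intro s _
      rw [deriv_const_mul_field]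
      congr 1
      have := congrFun (ih (T.erase s)) v
      exact this
    rw [Finset.sum_congr rfl h2]
    -- now the swap
    show _ = ∑ s ∈ T, A i (col s) * RR A col (j :: l) (T.erase s) v
    have expand : ∀ (a b : Fin m) (s : Fin N),
        A a (col s) * RR A col (b :: l) (T.erase s) v
        = ∑ s' ∈ T.erase s, A a (col s) * (A b (col s') *
            RR A col l ((T.erase s).erase s') v) := by
      intro a b s
      show A a (col s) * (∑ s' ∈ T.erase s, A b (col s') *
          RR A col l ((T.erase s).erase s') v) = _
      rw [Finset.mul_sum]
    rw [Finset.sum_congr rfl fun s _ => expand j i s,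
      Finset.sum_congr rfl fun s _ => expand i j s]
    rw [sum_erase_comm T (fun s s' => A j (col s) * (A i (col s') *
      RR A col l ((T.erase s).erase s') v))]
    refine Finset.sum_congr rfl fun s _ => Finset.sum_congr rfl fun s' _ => ?_
    rw [Finset.erase_right_comm]
    ring

lemma DX_PP : ∀ (l : List (Fin m)) (T : Finset (Fin N)),
    DX l (fun v => PP A col T v) = fun v => RR A col l T v := by
  intro l
  induction l with
  | nil => intro T; rfl
  | cons i l ih =>
    intro T
    show pderivAt (Sum.inl i) (DX l (fun v => PP A col T v)) = _
    rw [ih T, pderivAt_RR A col i l T]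

end

section
variable {m N : ℕ} (A : Matrix (Fin m) (Fin m) ℂ)

lemma DY_comp (g : ℂ → ℂ) (hg : ∀ k, Differentiable ℂ (iteratedDeriv k g)) :
    ∀ l : List (Fin m), DY l (fun v => g (SS A v)) =
      fun v => ((l.map fun j => cc A j v).prod) * iteratedDeriv l.length g (SS A v) := by
  intro l
  induction l with
  | nil =>
    funext v
    simp [DY, iteratedDeriv_zero]
  | cons j l ih =>
    funext v
    show pderivAt (Sum.inr j) (DY l (fun v => g (SS A v))) v = _
    rw [ih]
    show deriv (fun t => ((l.map fun j' => cc A j' (Function.update v (Sum.inr j) t)).prod) *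
      iteratedDeriv l.length g (SS A (Function.update v (Sum.inr j) t))) (v (Sum.inr j)) = _
    have hmap : ∀ t : ℂ, (l.map fun j' => cc A j' (Function.update v (Sum.inr j) t))
        = l.map fun j' => cc A j' v := by
      intro t
      refine List.map_congr_left fun j' _ => cc_update_inr A j' j v t
    have hfun : (fun t => ((l.map fun j' =>
          cc A j' (Function.update v (Sum.inr j) t)).prod) *
        iteratedDeriv l.length g (SS A (Function.update v (Sum.inr j) t)))
        = fun t => ((l.map fun j' => cc A j' v).prod) *
          iteratedDeriv l.length g (SS A (Function.update v (Sum.inr j) t)) := by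
      funext t
      rw [hmap t]
    rw [hfun]
    have hS := SS_hasDeriv A j v (v (Sum.inr j))
    have hgk : HasDerivAt (iteratedDeriv l.length g)
        (iteratedDeriv (l.length + 1) g (SS A v)) (SS A (Function.update v (Sum.inr j)
          (v (Sum.inr j)))) := by
      rw [Function.update_eq_self]
      rw [iteratedDeriv_succ]
      exact ((hg l.length) (SS A v)).hasDerivAt
    have hcomp := (hgk.comp (v (Sum.inr j)) hS).const_mul
      ((l.map fun j' => cc A j' v).prod)
    have hcomp' : HasDerivAt (fun t => ((l.map fun j' => cc A j' v).prod) *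
        iteratedDeriv l.length g (SS A (Function.update v (Sum.inr j) t)))
        ((l.map fun j' => cc A j' v).prod *
          (iteratedDeriv (l.length + 1) g (SS A v) * cc A j v)) (v (Sum.inr j)) := by
      simpa [Function.comp] using hcomp
    rw [hcomp'.deriv]
    simp only [List.map_cons, List.prod_cons, List.length_cons]
    rw [Function.update_eq_self] at *
    ring

lemma DX_congrZ (F₁ F₂ : (Fin m ⊕ Fin m → ℂ) → ℂ)
    (h : ∀ v, (∀ j, v (Sum.inr j) = 0) → F₁ v = F₂ v) :
    ∀ (l : List (Fin m)) (v : Fin m ⊕ Fin m → ℂ), (∀ j, v (Sum.inr j) = 0) →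
      DX l F₁ v = DX l F₂ v := by
  intro l
  induction l with
  | nil => exact h
  | cons i l ih =>
    intro v hv
    show deriv (fun t => DX l F₁ (Function.update v (Sum.inl i) t)) (v (Sum.inl i))
      = deriv (fun t => DX l F₂ (Function.update v (Sum.inl i) t)) (v (Sum.inl i))
    congr 1
    funext t
    refine ih _ fun j => ?_
    rw [Function.update_of_ne (by simp)]
    exact hv j

lemma DX_const_mul (K : ℂ) (F : (Fin m ⊕ Fin m → ℂ) → ℂ) :
    ∀ l : List (Fin m), DX l (fun v => K * F v) = fun v => K * DX l F v := by
  intro l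
  induction l with
  | nil => rfl
  | cons i l ih =>
    funext v
    show pderivAt (Sum.inl i) (DX l (fun v => K * F v)) v = _
    rw [ih]
    show deriv (fun t => K * DX l F (Function.update v (Sum.inl i) t)) (v (Sum.inl i)) = _
    rw [deriv_const_mul_field]
    rfl

lemma diffIter {g : ℂ → ℂ} (hg : Differentiable ℂ g) (k : ℕ) :
    Differentiable ℂ (iteratedDeriv k g) := by
  have hc : ContDiff ℂ ((k + 1 : ℕ) : WithTop ℕ∞) g := hg.contDiff
  exact hc.differentiable_iteratedDeriv k (by exact_mod_cast Nat.lt_succ_self k)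

end

section
variable {m N : ℕ} (A : Matrix (Fin m) (Fin m) ℂ) (col : Fin N → Fin m)

lemma cc_zero (j : Fin m) : cc A j (fun _ => 0) = 0 := by simp [cc]

lemma PP_zero (T : Finset (Fin N)) :
    PP A col T (fun _ => 0) = if T = ∅ then 1 else 0 := by
  by_cases hT : T = ∅
  · simp [PP, hT]
  · rw [if_neg hT]
    obtain ⟨s, hs⟩ := Finset.nonempty_iff_ne_empty.mpr hT
    exact Finset.prod_eq_zero hs (cc_zero A (col s))

lemma cons_cond {n : ℕ} (s : Fin N) (g' : Fin n → Fin N) (T : Finset (Fin N)) :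
    (Function.Injective (Fin.cons s g' : Fin (n + 1) → Fin N) ∧
      Finset.image (Fin.cons s g') Finset.univ = T)
    ↔ s ∈ T ∧ (Function.Injective g' ∧ Finset.image g' Finset.univ = T.erase s) := by
  have himg : Finset.image (Fin.cons s g' : Fin (n + 1) → Fin N) Finset.univ
      = insert s (Finset.image g' Finset.univ) := by
    ext x
    simp only [Finset.mem_image, Finset.mem_insert, Finset.mem_univ, true_and]
    constructor
    · rintro ⟨k, hk⟩
      rcases Fin.eq_zero_or_eq_succ k with h0 | ⟨k', rfl⟩
      · left; rw [h0, Fin.cons_zero] at hk; exact hk.symm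
      · right; exact ⟨k', by rwa [Fin.cons_succ] at hk⟩
    · rintro (rfl | ⟨k', hk'⟩)
      · exact ⟨0, Fin.cons_zero _ _⟩
      · exact ⟨k'.succ, by rwa [Fin.cons_succ]⟩
  constructor
  · rintro ⟨hinj, himgT⟩
    obtain ⟨hnr, hinj'⟩ := Fin.cons_injective_iff.mp hinj
    have hsT : s ∈ T := by
      rw [← himgT, himg]; exact Finset.mem_insert_self _ _
    refine ⟨hsT, hinj', ?_⟩
    have hsni : s ∉ Finset.image g' Finset.univ := by
      intro hmem
      obtain ⟨k, _, hk⟩ := Finset.mem_image.mp hmem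
      exact hnr ⟨k, hk⟩
    rw [← himgT, himg, Finset.erase_insert hsni]
  · rintro ⟨hsT, hinj', himg'⟩
    have hnr : s ∉ Set.range g' := by
      rintro ⟨k, hk⟩
      have : s ∈ T.erase s := by
        rw [← himg']; exact Finset.mem_image.mpr ⟨k, Finset.mem_univ _, hk⟩
      exact (Finset.notMem_erase s T) this
    refine ⟨Fin.cons_injective_iff.mpr ⟨hnr, hinj'⟩, ?_⟩
    rw [himg, himg', Finset.insert_erase hsT]

lemma RR_zero : ∀ (l : List (Fin m)) (T : Finset (Fin N)),
    RR A col l T (fun _ => 0)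
      = ∑ g ∈ Finset.univ.filter (fun g : Fin l.length → Fin N =>
          Function.Injective g ∧ Finset.image g Finset.univ = T),
        ∏ k, A (l.get k) (col (g k)) := by
  intro l
  induction l with
  | nil =>
    intro T
    show PP A col T (fun _ => 0) = _
    rw [PP_zero, Finset.sum_filter]
    rw [Fintype.sum_eq_single (fun k : Fin ([] : List (Fin m)).length => k.elim0)
      (fun g hg => absurd (funext fun k => k.elim0) hg)]
    by_cases hT : T = ∅
    · subst hT
      have h1 : Function.Injective (fun k : Fin ([] : List (Fin m)).length =>
          (k.elim0 : Fin N)) := fun a _ _ => a.elim0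
      have h2 : Finset.image (fun k : Fin ([] : List (Fin m)).length => (k.elim0 : Fin N))
          Finset.univ = (∅ : Finset (Fin N)) := by simp
      rw [if_pos rfl, if_pos ⟨h1, h2⟩]
      simp
    · rw [if_neg hT, if_neg]
      rintro ⟨_, himg⟩
      exact hT (by rw [← himg]; simp)
  | cons i l ih =>
    intro T
    show (∑ s ∈ T, A i (col s) * RR A col l (T.erase s) (fun _ => 0))
      = ∑ g ∈ Finset.univ.filter (fun g : Fin (l.length + 1) → Fin N =>
          Function.Injective g ∧ Finset.image g Finset.univ = T),
        ∏ k : Fin (l.length + 1), A ((i :: l).get k) (col (g k))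
    rw [Finset.sum_filter]
    rw [← Equiv.sum_comp (Fin.consEquiv (fun _ : Fin (l.length + 1) => Fin N))
      (fun g : Fin (l.length + 1) → Fin N =>
        if Function.Injective g ∧ Finset.image g Finset.univ = T then
          ∏ k : Fin (l.length + 1), A ((i :: l).get k) (col (g k)) else 0)]
    rw [Fintype.sum_prod_type]
    have hterm : ∀ (s : Fin N) (g' : Fin l.length → Fin N),
        (if Function.Injective (Fin.consEquiv (fun _ : Fin (l.length + 1) => Fin N) (s, g'))
            ∧ Finset.image (Fin.consEquiv (fun _ : Fin (l.length + 1) => Fin N) (s, g'))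
              Finset.univ = T then
          ∏ k : Fin (l.length + 1), A ((i :: l).get k)
            (col ((Fin.consEquiv (fun _ : Fin (l.length + 1) => Fin N) (s, g')) k)) else 0)
        = if s ∈ T then
            (if Function.Injective g' ∧ Finset.image g' Finset.univ = T.erase s then
              A i (col s) * ∏ k, A (l.get k) (col (g' k)) else 0) else 0 := by
      intro s g'
      have hc : Fin.consEquiv (fun _ : Fin (l.length + 1) => Fin N) (s, g')
          = Fin.cons s g' := rfl
      rw [hc]
      have hprod : (∏ k : Fin (l.length + 1), A ((i :: l).get k)
          (col ((Fin.cons s g' : Fin (l.length + 1) → Fin N) k)))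
          = A i (col s) * ∏ k, A (l.get k) (col (g' k)) := by
        rw [Fin.prod_univ_succ]
        simp [Fin.cons_zero, Fin.cons_succ]
      rw [hprod]
      simp only [cons_cond, ite_and]
    rw [Finset.sum_congr rfl fun s _ => Finset.sum_congr rfl fun g' _ => hterm s g']
    have hpull : ∀ s : Fin N,
        (∑ g' : Fin l.length → Fin N, if s ∈ T then
          (if Function.Injective g' ∧ Finset.image g' Finset.univ = T.erase s then
            A i (col s) * ∏ k, A (l.get k) (col (g' k)) else 0) else 0)
        = if s ∈ T then A i (col s) *
            ∑ g' ∈ Finset.univ.filter (fun g' : Fin l.length → Fin N =>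
              Function.Injective g' ∧ Finset.image g' Finset.univ = T.erase s),
              ∏ k, A (l.get k) (col (g' k)) else 0 := by
      intro s
      by_cases hs : s ∈ T
      · simp only [if_pos hs, Finset.sum_filter, Finset.mul_sum, mul_ite, mul_zero]
      · simp [hs]
    rw [Finset.sum_congr rfl fun s _ => hpull s]
    rw [Finset.sum_ite_mem, Finset.univ_inter]
    exact Finset.sum_congr rfl fun s hs => by rw [ih (T.erase s)]

end

section
variable {m N : ℕ} (A : Matrix (Fin m) (Fin m) ℂ) (col : Fin N → Fin m)

lemma permanent_reindex {a b : ℕ} (e : Fin a ≃ Fin b) (M : Matrix (Fin b) (Fin b) ℂ) :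
    (Matrix.of fun r c : Fin a => M (e r) (e c)).permanent = M.permanent := by
  unfold Matrix.permanent
  refine Fintype.sum_equiv (Equiv.permCongr e) _ _ fun σ => ?_
  rw [← Equiv.prod_comp e (fun j => M ((Equiv.permCongr e σ) j) j)]
  refine Finset.prod_congr rfl fun i _ => ?_
  simp [Equiv.permCongr_apply]

lemma map_prod_eq_PP (q : Fin m → ℕ) (v : Fin m ⊕ Fin m → ℂ) :
    ((repList q).map fun j => cc A j v).prod
      = PP A (fun s : Fin (∑ j, q j) => (repList q).get (Fin.cast (repList_length q).symm s))
          Finset.univ v := by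
  conv_lhs => rw [← List.ofFn_get (repList q)]
  rw [List.map_ofFn, List.prod_ofFn]
  unfold PP
  rw [← Equiv.prod_comp (finCongr (repList_length q))
    (fun s => cc A ((repList q).get (Fin.cast (repList_length q).symm s)) v)]
  refine Finset.prod_congr rfl fun k _ => ?_
  have : Fin.cast (repList_length q).symm (finCongr (repList_length q) k) = k := by
    apply Fin.ext; rfl
  simp only [Function.comp, this]

lemma sum_inj_eq_permanent (l : List (Fin m)) (h : l.length = N) :
    (∑ g ∈ Finset.univ.filter (fun g : Fin l.length → Fin N =>
        Function.Injective g ∧ Finset.image g Finset.univ = Finset.univ),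
      ∏ k, A (l.get k) (col (g k)))
    = (Matrix.of fun r c : Fin N => A (l.get (Fin.cast h.symm r)) (col c)).permanent := by
  have hbij : ∀ g ∈ Finset.univ.filter (fun g : Fin l.length → Fin N =>
      Function.Injective g ∧ Finset.image g Finset.univ = Finset.univ),
      Function.Bijective g := by
    intro g hg
    obtain ⟨-, hinj, himg⟩ := Finset.mem_filter.mp hg
    refine ⟨hinj, fun r => ?_⟩
    have hr : r ∈ Finset.image g Finset.univ := himg ▸ Finset.mem_univ r
    obtain ⟨k, -, hk⟩ := Finset.mem_image.mp hr
    exact ⟨k, hk⟩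
  have hjmem : ∀ σ : Equiv.Perm (Fin N), (fun k => σ.symm (finCongr h k)) ∈
      Finset.univ.filter (fun g : Fin l.length → Fin N =>
        Function.Injective g ∧ Finset.image g Finset.univ = Finset.univ) := by
    intro σ
    refine Finset.mem_filter.mpr ⟨Finset.mem_univ _, ?_, ?_⟩
    · intro a b hab
      exact (finCongr h).injective (σ.symm.injective hab)
    · refine Finset.eq_univ_iff_forall.mpr fun r => Finset.mem_image.mpr
        ⟨(finCongr h).symm (σ r), Finset.mem_univ _, by simp⟩
  unfold Matrix.permanent
  refine Finset.sum_bij'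
    (fun g hg => ((Equiv.ofBijective g (hbij g hg)).symm.trans (finCongr h)))
    (fun σ _ => fun k => σ.symm (finCongr h k))
    (fun g hg => Finset.mem_univ _)
    (fun σ _ => hjmem σ) (fun g hg => ?_) (fun σ hσ => ?_) (fun g hg => ?_)
  · funext k
    simp [Equiv.symm_trans_apply]
  · apply Equiv.ext
    intro r
    have hk := Equiv.ofBijective_apply_symm_apply
      (fun k => σ.symm (finCongr h k)) (hbij _ (hjmem σ)) r
    simp only [Equiv.trans_apply]
    exact (Equiv.symm_apply_eq σ).mp hk
  · rw [← Equiv.prod_comp (Equiv.ofBijective g (hbij g hg))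
      (fun r => (Matrix.of fun r c : Fin N => A (l.get (Fin.cast h.symm r)) (col c))
        (((Equiv.ofBijective g (hbij g hg)).symm.trans (finCongr h)) r) r)]
    refine Finset.prod_congr rfl fun k _ => ?_
    simp only [Matrix.of_apply, Equiv.trans_apply, Equiv.symm_apply_apply]
    have h1 : Fin.cast h.symm (finCongr h k) = k := Fin.ext rfl
    have h2 : (Equiv.ofBijective g (hbij g hg)) k = g k := rfl
    rw [h1, h2]

end

end GFThm

/-- **Derivative form of the generating-function theorem.**
The variables `x` are indexed by `Sum.inl`, the variables `y` by `Sum.inr`. -/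
theorem multi_pderiv_f_bilinear (m : ℕ) (f : ℂ → ℂ) (hf : Differentiable ℂ f)
    (A : Matrix (Fin m) (Fin m) ℂ) (n : ℕ) (p q : Fin m → ℕ)
    (hp : ∑ i, p i = n) (hq : ∑ j, q j = n) :
    multiPDeriv ((List.finRange m).map Sum.inl ++ (List.finRange m).map Sum.inr)
        (Sum.elim p q)
        (fun v => f (∑ i, ∑ j, v (Sum.inl i) * A i j * v (Sum.inr j)))
        (fun _ => 0) =
      perRep A p q * iteratedDeriv n f 0 := by
  classical
  set col : Fin (∑ j, q j) → Fin m :=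
    fun s => (repList q).get (Fin.cast (repList_length q).symm s) with hcol
  have hfun : (fun v : Fin m ⊕ Fin m → ℂ =>
      f (∑ i, ∑ j, v (Sum.inl i) * A i j * v (Sum.inr j)))
      = fun v => f (GFThm.SS A v) := by
    funext v
    congr 1
    simp only [GFThm.SS, GFThm.cc, Finset.sum_mul]
    rw [Finset.sum_comm]
  rw [hfun, GFThm.multiPDeriv_split p q,
    GFThm.DY_comp A f (fun k => GFThm.diffIter hf k) (repList q)]
  have hlenq : (repList q).length = n := (repList_length q).trans hq
  have hlenp : (repList p).length = ∑ j, q j := (repList_length p).trans (hp.trans hq.symm)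
  simp only [hlenq]
  have hagree : ∀ v : Fin m ⊕ Fin m → ℂ, (∀ j, v (Sum.inr j) = 0) →
      (((repList q).map fun j => GFThm.cc A j v).prod * iteratedDeriv n f (GFThm.SS A v))
      = iteratedDeriv n f 0 * GFThm.PP A col Finset.univ v := by
    intro v hv
    have hS : GFThm.SS A v = 0 :=
      Finset.sum_eq_zero fun j _ => by rw [hv j, mul_zero]
    rw [hS, mul_comm, GFThm.map_prod_eq_PP A q v, ← hcol]
  rw [GFThm.DX_congrZ _ _ hagree (repList p) (fun _ => 0) (fun j => rfl)]
  rw [GFThm.DX_const_mul (iteratedDeriv n f 0)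
    (fun v => GFThm.PP A col Finset.univ v) (repList p)]
  show iteratedDeriv n f 0 *
      GFThm.DX (repList p) (fun v => GFThm.PP A col Finset.univ v) (fun _ => 0) = _
  rw [GFThm.DX_PP A col (repList p) Finset.univ]
  show iteratedDeriv n f 0 *
      GFThm.RR A col (repList p) Finset.univ (fun _ => 0) = _
  rw [GFThm.RR_zero A col (repList p) Finset.univ,
    GFThm.sum_inj_eq_permanent A col (repList p) hlenp]
  conv_rhs => rw [mul_comm]
  congr 1
  unfold perRep
  rw [dif_pos (hp.trans hq.symm)]
  have hM : (Matrix.of fun r c : Fin (∑ j, q j) =>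
      A ((repList p).get (Fin.cast hlenp.symm r)) (col c))
      = Matrix.of fun r c : Fin (∑ j, q j) =>
          (Matrix.of fun r c : Fin (∑ i, p i) =>
            repMat A p q r (Fin.cast (hp.trans hq.symm) c))
          (finCongr (hq.trans hp.symm) r) (finCongr (hq.trans hp.symm) c) := by
    ext r c
    show A ((repList p).get (Fin.cast hlenp.symm r)) (col c)
      = repMat A p q (finCongr (hq.trans hp.symm) r)
          (Fin.cast (hp.trans hq.symm) (finCongr (hq.trans hp.symm) c))
    unfold repMat
    rw [hcol]
    show A ((repList p).get (Fin.cast hlenp.symm r))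
        ((repList q).get (Fin.cast (repList_length q).symm c)) = _
    rfl
  rw [hM]
  exact GFThm.permanent_reindex (finCongr (hq.trans hp.symm)) _
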